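/- Let L be a Lie algebra over a commutative ring R, and let V₀, V₁ be R-submodules of L such that V₀ ⊓ V₁ = ⊥, V₀ ⊔ V₁ = ⊤, and ⁅V₀, V₁⁆ ⊆ V₁. Let π : L →ₗ[R] V₀ be the projection onto V₀ along V₁ (π restricts to the identity on V₀ and vanishes on V₁). Then the bracket on V₀ defined by ⁅x, y⁆₀ := π ⁅x, y⁆ (for x, y ∈ V₀, the inner bracket taken in L) is alternating and satisfies the Jacobi identity; hence it makes V₀ a Lie algebra over R. -/
import Mathlib


/-- **The reduced algebra `|V₀|`** (Definition 3 of the paper).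
Let `L = V₀ ⊕ V₁` (internal direct sum of submodules) with `⁅V₀, V₁⁆ ⊆ V₁`,
and let `π : L →ₗ[R] V₀` be the projection onto `V₀` along `V₁`.  Then the
bracket `⁅x, y⁆₀ := π ⁅x, y⁆` on `V₀` is alternating and satisfies the
Jacobi (Leibniz) identity, hence makes `V₀` a Lie algebra over `R`. -/
theorem reducedAlgebra_isLieAlgebra
    (R : Type*) [CommRing R] (L : Type*) [LieRing L] [LieAlgebra R L]
    (V₀ V₁ : Submodule R L)
    (hinf : V₀ ⊓ V₁ = ⊥) (hsup : V₀ ⊔ V₁ = ⊤)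
    (hbr : ∀ x ∈ V₀, ∀ y ∈ V₁, ⁅x, y⁆ ∈ V₁)
    (π : L →ₗ[R] V₀)
    (hπ₀ : ∀ x : V₀, π (x : L) = x)
    (hπ₁ : ∀ y ∈ V₁, π y = 0) :
    (∀ x : V₀, π ⁅(x : L), (x : L)⁆ = 0) ∧
    (∀ x y z : V₀,
      π ⁅(x : L), ((π ⁅(y : L), (z : L)⁆ : V₀) : L)⁆
        = π ⁅((π ⁅(x : L), (y : L)⁆ : V₀) : L), (z : L)⁆
          + π ⁅(y : L), ((π ⁅(x : L), (z : L)⁆ : V₀) : L)⁆) := by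
  have key : ∀ a : L, a - ((π a : V₀) : L) ∈ V₁ := by
    intro a
    have ha : a ∈ V₀ ⊔ V₁ := by rw [hsup]; trivial
    obtain ⟨v0, hv0, v1, hv1, rfl⟩ := Submodule.mem_sup.mp ha
    have hπ : π (v0 + v1) = ⟨v0, hv0⟩ := by
      rw [map_add, hπ₁ v1 hv1, add_zero]
      exact hπ₀ ⟨v0, hv0⟩
    rw [hπ]
    simpa using hv1
  have red : ∀ (x : V₀) (a : L),
      π ⁅(x : L), ((π a : V₀) : L)⁆ = π ⁅(x : L), a⁆ := by
    intro x a
    have h1 : π ⁅(x : L), a - ((π a : V₀) : L)⁆ = 0 :=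
      hπ₁ _ (hbr x x.2 _ (key a))
    rw [lie_sub, map_sub, sub_eq_zero] at h1
    exact h1.symm
  have red' : ∀ (a : L) (z : V₀),
      π ⁅((π a : V₀) : L), (z : L)⁆ = π ⁅a, (z : L)⁆ := by
    intro a z
    have hm : ⁅a - ((π a : V₀) : L), (z : L)⁆ ∈ V₁ := by
      rw [← lie_skew]
      exact V₁.neg_mem (hbr z z.2 _ (key a))
    have h1 : π ⁅a - ((π a : V₀) : L), (z : L)⁆ = 0 := hπ₁ _ hm
    rw [sub_lie, map_sub, sub_eq_zero] at h1
    exact h1.symm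
  refine ⟨fun x => by rw [lie_self, map_zero], fun x y z => ?_⟩
  rw [red x, red' _ z, red y, leibniz_lie, map_add]
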